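/- Let ω < 0, 0 < α ≤ 1 and 0 < αγ ≤ β ≤ 1. For every θ ∈ (0, απ/2), the map Λ is differentiable at θ (as a function from ℝ to ℂ) with derivative Λ′(θ) = [sin(απ/2)/(α·sin θ·sin(απ/2 − θ))]·[β − αγ·(sin(απ/2 − θ)/sin(απ/2))·exp(−iθ)]·Λ(θ). -/

import Mathlib

open Real Complex Filter Set Topology

/-- The curve parametrization Λ(θ) bounding the stability region. -/
noncomputable def Lam (α β γ ω : ℝ) (θ : ℝ) : ℂ :=
  ((|ω| ^ (β / α) * Real.sin θ ^ (β / α - γ) * Real.sin (α * π / 2) ^ γ *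
      Real.sin (α * π / 2 - θ) ^ (-(β / α)) : ℝ) : ℂ) *
    Complex.exp (Complex.I * ((γ * θ + (β - α * γ) * π / 2 : ℝ) : ℂ))

/-- The characteristic function F(s) = s^(β-αγ) (s^α - ω)^γ (principal branches). -/
noncomputable def Fc (α β γ ω : ℝ) (s : ℂ) : ℂ :=
  s ^ ((β - α * γ : ℝ) : ℂ) * (s ^ ((α : ℝ) : ℂ) - (ω : ℂ)) ^ ((γ : ℝ) : ℂ)

/-- μ(θ) = (|ω| sin θ / sin(απ/2 - θ))^(1/α). -/
noncomputable def muP (α ω : ℝ) (θ : ℝ) : ℝ :=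
  (|ω| * Real.sin θ / Real.sin (α * π / 2 - θ)) ^ (1 / α)

/-- ρ(θ) = |ω| sin(απ/2) / sin(απ/2 - θ). -/
noncomputable def rhoP (α ω : ℝ) (θ : ℝ) : ℝ :=
  |ω| * Real.sin (α * π / 2) / Real.sin (α * π / 2 - θ)

theorem lam_hasDerivAt (α β γ ω : ℝ) (hω : ω < 0) (hα0 : 0 < α) (hα1 : α ≤ 1)
    (hαγ : 0 < α * γ) (hβ0 : α * γ ≤ β) (hβ1 : β ≤ 1) :
    ∀ θ ∈ Set.Ioo 0 (α * π / 2),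
      HasDerivAt (Lam α β γ ω)
        (((Real.sin (α * π / 2) / (α * Real.sin θ * Real.sin (α * π / 2 - θ)) : ℝ) : ℂ) *
          (((β : ℝ) : ℂ) - ((α * γ : ℝ) : ℂ) *
            ((Real.sin (α * π / 2 - θ) / Real.sin (α * π / 2) : ℝ) : ℂ) *
            Complex.exp (-(Complex.I * (θ : ℂ)))) *
          Lam α β γ ω θ) θ := by
  intro θ hθ
  obtain ⟨hθ0, hθs⟩ := hθ
  have hπ : (0:ℝ) < π := Real.pi_pos
  have hs0 : 0 < α * π / 2 := by positivity
  have hslt : α * π / 2 ≤ π / 2 := by nlinarith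
  have hst : 0 < Real.sin θ :=
    Real.sin_pos_of_pos_of_lt_pi hθ0 (lt_of_lt_of_le hθs (by linarith))
  have hss : 0 < Real.sin (α * π / 2 - θ) :=
    Real.sin_pos_of_pos_of_lt_pi (by linarith) (by linarith)
  have hS : 0 < Real.sin (α * π / 2) :=
    Real.sin_pos_of_pos_of_lt_pi hs0 (by linarith)
  have hω0 : 0 < |ω| := abs_pos.mpr hω.ne
  -- derivative of sin θ ^ (β/α - γ)
  have h1 : HasDerivAt (fun t : ℝ => Real.sin t ^ (β / α - γ))
      ((β / α - γ) * Real.sin θ ^ (β / α - γ - 1) * Real.cos θ) θ := by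
    have := (Real.hasDerivAt_rpow_const (x := Real.sin θ) (p := β / α - γ)
      (Or.inl hst.ne')).comp θ (Real.hasDerivAt_sin θ)
    exact this.congr_deriv (by ring)
  -- derivative of sin (απ/2 - θ) ^ (-(β/α))
  have hin : HasDerivAt (fun t : ℝ => α * π / 2 - t) (-1) θ := by
    simpa using (hasDerivAt_id θ).const_sub (α * π / 2)
  have h2 : HasDerivAt (fun t : ℝ => Real.sin (α * π / 2 - t) ^ (-(β / α)))
      ((β / α) * Real.sin (α * π / 2 - θ) ^ (-(β / α) - 1) * Real.cos (α * π / 2 - θ)) θ := by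
    have hsin : HasDerivAt (fun t : ℝ => Real.sin (α * π / 2 - t))
        (Real.cos (α * π / 2 - θ) * (-1)) θ := (Real.hasDerivAt_sin _).comp θ hin
    have := (Real.hasDerivAt_rpow_const (x := Real.sin (α * π / 2 - θ)) (p := -(β / α))
      (Or.inl hss.ne')).comp θ hsin
    exact this.congr_deriv (by ring)
  -- derivative of the real amplitude
  have hR : HasDerivAt (fun t : ℝ => |ω| ^ (β / α) * Real.sin t ^ (β / α - γ) *
      Real.sin (α * π / 2) ^ γ * Real.sin (α * π / 2 - t) ^ (-(β / α)))
      ((|ω| ^ (β / α) * ((β / α - γ) * Real.sin θ ^ (β / α - γ - 1) * Real.cos θ) *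
          Real.sin (α * π / 2) ^ γ) * Real.sin (α * π / 2 - θ) ^ (-(β / α)) +
        (|ω| ^ (β / α) * Real.sin θ ^ (β / α - γ) * Real.sin (α * π / 2) ^ γ) *
          ((β / α) * Real.sin (α * π / 2 - θ) ^ (-(β / α) - 1) * Real.cos (α * π / 2 - θ))) θ :=
    ((h1.const_mul (|ω| ^ (β / α))).mul_const (Real.sin (α * π / 2) ^ γ)).mul h2
  -- derivative of the phase factor
  have hph : HasDerivAt (fun t : ℝ => γ * t + (β - α * γ) * π / 2) γ θ := by
    simpa using ((hasDerivAt_id θ).const_mul γ).add_const ((β - α * γ) * π / 2)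
  have hE : HasDerivAt (fun t : ℝ =>
      Complex.exp (Complex.I * ((γ * t + (β - α * γ) * π / 2 : ℝ) : ℂ)))
      (Complex.exp (Complex.I * ((γ * θ + (β - α * γ) * π / 2 : ℝ) : ℂ)) *
        (Complex.I * (γ : ℂ))) θ :=
    (hph.ofReal_comp.const_mul Complex.I).cexp
  have hL := (hR.ofReal_comp.mul hE)
  have hLam : HasDerivAt (Lam α β γ ω) _ θ := hL
  refine hLam.congr_deriv ?_
  -- now prove the algebraic identity
  simp only [Lam]
  set S := Real.sin (α * π / 2) with hSdef
  set st := Real.sin θ with hstdef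
  set ss := Real.sin (α * π / 2 - θ) with hssdef
  set cθ := Real.cos θ with hcdef
  have hadd : S = ss * cθ + Real.cos (α * π / 2 - θ) * st := by
    rw [hssdef, hstdef, hcdef, hSdef, ← Real.sin_add]
    ring_nf
  have hc2 : Real.cos (α * π / 2 - θ) = (S - ss * cθ) / st := by
    rw [eq_div_iff hst.ne']
    linarith
  rw [hc2]
  have e1 : st ^ (β / α - γ - 1) = st ^ (β / α - γ) / st := by
    rw [Real.rpow_sub hst, Real.rpow_one]
  have e2 : ss ^ (-(β / α) - 1) = ss ^ (-(β / α)) / ss := by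
    rw [Real.rpow_sub hss, Real.rpow_one]
  rw [e1, e2]
  have hexp : Complex.exp (-(Complex.I * (θ : ℂ))) = (cθ : ℂ) - (st : ℂ) * Complex.I := by
    rw [show -(Complex.I * (θ : ℂ)) = ((-θ : ℝ) : ℂ) * Complex.I by push_cast; ring,
      Complex.exp_mul_I]
    push_cast
    simp [hcdef, hstdef, Complex.cos_neg, Complex.sin_neg, Complex.ofReal_cos,
      Complex.ofReal_sin]
    ring
  rw [hexp]
  set W := |ω| ^ (β / α) with hW
  set X := st ^ (β / α - γ) with hX
  set G := S ^ γ with hG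
  set Y := ss ^ (-(β / α)) with hY
  have hstC : (st : ℂ) ≠ 0 := by exact_mod_cast hst.ne'
  have hssC : (ss : ℂ) ≠ 0 := by exact_mod_cast hss.ne'
  have hSC : (S : ℂ) ≠ 0 := by exact_mod_cast hS.ne'
  have hαC : (α : ℂ) ≠ 0 := by exact_mod_cast hα0.ne'
  push_cast
  field_simp
  ring
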